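/- If a real number b satisfies condition (c) and ℓ ≥ 1 is a natural number, then the nonnegative real ℓ-th root b^{1/ℓ} of b satisfies condition (c). -/

import Mathlib

/-- Condition (c): `b` is a nonnegative real algebraic integer and every complex
root of its minimal polynomial over `ℚ` has modulus at most `b`. -/
def CondC (b : ℝ) : Prop :=
  0 ≤ b ∧ IsIntegral ℤ b ∧
    ∀ z ∈ ((minpoly ℚ b).map (algebraMap ℚ ℂ)).roots, ‖z‖ ≤ b

theorem condC_root (b : ℝ) (hb : CondC b) (ℓ : ℕ) (hℓ : 1 ≤ ℓ) :
    CondC (b ^ (1 / (ℓ : ℝ))) := by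
  obtain ⟨hb0, hbi, hroots⟩ := hb
  have hℓ0 : ℓ ≠ 0 := Nat.one_le_iff_ne_zero.mp hℓ
  have hℓ0' : (ℓ : ℝ) ≠ 0 := Nat.cast_ne_zero.mpr hℓ0
  set c : ℝ := b ^ (1 / (ℓ : ℝ)) with hcdef
  have hc0 : 0 ≤ c := Real.rpow_nonneg hb0 _
  have hcl : c ^ ℓ = b := by
    rw [hcdef, ← Real.rpow_natCast (b ^ (1 / (ℓ : ℝ))) ℓ, ← Real.rpow_mul hb0,
      one_div_mul_cancel hℓ0', Real.rpow_one]
  have hci : IsIntegral ℤ c := by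
    refine ⟨(minpoly ℤ b).comp (Polynomial.X ^ ℓ),
      (minpoly.monic hbi).comp (Polynomial.monic_X_pow ℓ) ?_, ?_⟩
    · simpa using hℓ0
    · rw [Polynomial.eval₂_comp]
      simp only [hcl, Polynomial.eval₂_X_pow]
      exact minpoly.aeval ℤ b
  refine ⟨hc0, hci, ?_⟩
  have hbQ : IsIntegral ℚ b := hbi.tower_top
  have hcQ : IsIntegral ℚ c := hci.tower_top
  intro z hz
  rw [Polynomial.mem_roots'] at hz
  obtain ⟨-, hzroot⟩ := hz
  have hz0 : Polynomial.aeval z (minpoly ℚ c) = 0 := by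
    rwa [Polynomial.aeval_def, ← Polynomial.eval_map]
  have hdvd : minpoly ℚ c ∣ (minpoly ℚ b).comp (Polynomial.X ^ ℓ) := by
    apply minpoly.dvd
    rw [Polynomial.aeval_comp]
    simp [hcl, minpoly.aeval ℚ b]
  have hzl : Polynomial.aeval (z ^ ℓ) (minpoly ℚ b) = 0 := by
    obtain ⟨q, hq⟩ := hdvd
    have := congrArg (Polynomial.aeval z) hq
    rw [map_mul, hz0, zero_mul, Polynomial.aeval_comp] at this
    simpa using this
  have hmem : z ^ ℓ ∈ ((minpoly ℚ b).map (algebraMap ℚ ℂ)).roots := by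
    rw [Polynomial.mem_roots']
    constructor
    · exact (Polynomial.map_ne_zero_iff (algebraMap ℚ ℂ).injective).mpr
        (minpoly.ne_zero hbQ)
    · rw [Polynomial.IsRoot, Polynomial.eval_map, ← Polynomial.aeval_def, hzl]
  have hle : ‖z ^ ℓ‖ ≤ b := hroots _ hmem
  rw [norm_pow] at hle
  have : ‖z‖ ^ ℓ ≤ c ^ ℓ := by rwa [hcl]
  exact le_of_pow_le_pow_left₀ hℓ0 hc0 this
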